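/- arXiv:2004.13129 — 6 statements merged into one kernel-verified Lean document; each statement's English description precedes it below -/
import Mathlib

section
/- Let n ≥ 1 be an integer and let M ⊂ ℝ^{n+1} be a set of locally finite n-dimensional Hausdorff measure. Then the set D := { x ∈ M : there exists R_x > 0 such that μH[n](M ∩ ∂B_{R_x}(x)) > 0 } is at most countable, where ∂B_R(x) := {y ∈ ℝ^{n+1} : |y − x| = R}. -/
open MeasureTheory Set Filter Metric
open scoped ENNReal NNReal RealInnerProductSpace

/-- Two spheres with distinct centers in `ℝ^{n+1}` intersect in a set of zero
`n`-dimensional Hausdorff measure (the intersection lies in an `(n-1)`-sphere). -/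
theorem sphere_inter_sphere_null
    (n : ℕ) (hn : 1 ≤ n) {x y : EuclideanSpace ℝ (Fin (n+1))} (hxy : x ≠ y)
    (R R' : ℝ) :
    μH[(n:ℝ)] (sphere x R ∩ sphere y R') = 0 := by
  have hv : y - x ≠ 0 := sub_ne_zero.mpr (Ne.symm hxy)
  set v : EuclideanSpace ℝ (Fin (n+1)) := y - x with hvdef
  have hv2 : ‖v‖^2 ≠ 0 := pow_ne_zero _ (norm_ne_zero_iff.mpr hv)
  set c : ℝ := (R^2 - R'^2 - ‖x‖^2 + ‖y‖^2)/2 with hcdef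
  set t : ℝ := (c - ⟪x, v⟫) / ‖v‖^2 with htdef
  set p : EuclideanSpace ℝ (Fin (n+1)) := x + t • v with hpdef
  set W := (ℝ ∙ v)ᗮ with hWdef
  set r : ℝ := Real.sqrt (R^2 - ‖p - x‖^2) with hrdef
  have key : ∀ z ∈ sphere x R ∩ sphere y R', z - p ∈ W ∧ ‖z - p‖ = r := by
    rintro z ⟨hz1, hz2⟩
    rw [mem_sphere, dist_eq_norm] at hz1 hz2
    have exp1 : ‖z‖^2 - 2*⟪z, x⟫ + ‖x‖^2 = R^2 := by
      rw [← @norm_sub_sq_real, hz1]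
    have exp2 : ‖z‖^2 - 2*⟪z, y⟫ + ‖y‖^2 = R'^2 := by
      rw [← @norm_sub_sq_real, hz2]
    have hzv : ⟪z, v⟫ = c := by
      rw [hvdef, inner_sub_right, hcdef]; linarith
    have hpv : ⟪p, v⟫ = c := by
      rw [hpdef, inner_add_left, real_inner_smul_left, real_inner_self_eq_norm_sq, htdef]
      field_simp
      ring
    have horth : ⟪z - p, v⟫ = 0 := by
      rw [inner_sub_left, hzv, hpv, sub_self]
    refine ⟨Submodule.mem_orthogonal_singleton_iff_inner_right.mpr
      (by rw [real_inner_comm]; exact horth), ?_⟩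
    have hpx : p - x = t • v := by rw [hpdef]; abel
    have horth2 : ⟪z - p, p - x⟫ = 0 := by
      rw [hpx, real_inner_smul_right, horth, mul_zero]
    have hpyth : ‖z - x‖^2 = ‖z - p‖^2 + ‖p - x‖^2 := by
      have hd : z - x = (z - p) + (p - x) := by abel
      rw [hd, @norm_add_sq_real, horth2]; ring
    have hsq : ‖z - p‖^2 = R^2 - ‖p - x‖^2 := by
      rw [← hz1]; linarith
    rw [hrdef, ← hsq, Real.sqrt_sq (norm_nonneg _)]
  haveI : Fact (Module.finrank ℝ (EuclideanSpace ℝ (Fin (n+1))) = n + 1) :=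
    ⟨finrank_euclideanSpace_fin⟩
  have hW : Module.finrank ℝ W = n := Submodule.finrank_orthogonal_span_singleton hv
  haveI : Nontrivial W := Module.nontrivial_of_finrank_pos (by omega : 0 < Module.finrank ℝ W)
  haveI : BorelSpace W := Subtype.borelSpace _
  set f : W → EuclideanSpace ℝ (Fin (n+1)) := fun w => p + (w : EuclideanSpace ℝ (Fin (n+1))) with hfdef
  have hiso : Isometry f := Isometry.of_dist_eq (fun a b => by
    simp only [hfdef, dist_eq_norm, add_sub_add_left_eq_sub, ← Submodule.coe_sub]
    rfl)
  have hsub : sphere x R ∩ sphere y R' ⊆ f '' (sphere (0:W) r) := by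
    intro z hz
    obtain ⟨hmem, hnorm⟩ := key z hz
    refine ⟨⟨z - p, hmem⟩, ?_, ?_⟩
    · rw [mem_sphere, dist_zero_right]
      exact hnorm
    · simp [hfdef]
  have him := hiso.lipschitz.hausdorffMeasure_image_le
    (by positivity : (0:ℝ) ≤ (n:ℝ)) (sphere (0:W) r)
  have hWmeas : μH[(n:ℝ)] (sphere (0:W) r) = 0 := by
    have hcast : ((n:ℝ)) = ((Module.finrank ℝ W : ℕ) : ℝ) := by rw [hW]
    rw [hcast]
    exact Measure.addHaar_sphere _ _ _
  refine le_antisymm ?_ (zero_le)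
  calc μH[(n:ℝ)] (sphere x R ∩ sphere y R') ≤ μH[(n:ℝ)] (f '' sphere (0:W) r) :=
        measure_mono hsub
    _ ≤ (1:ℝ≥0) ^ (n:ℝ) * μH[(n:ℝ)] (sphere (0:W) r) := him
    _ = 0 := by rw [hWmeas, mul_zero]

/-- For a set `M ⊂ ℝ^{n+1}` of locally finite `n`-dimensional Hausdorff measure,
the set of points `x ∈ M` around which some sphere `∂B_{R_x}(x)` carries positive
measure of `M` is at most countable. -/
theorem countable_positive_spheres
    (n : ℕ) (hn : 1 ≤ n)
    (M : Set (EuclideanSpace ℝ (Fin (n+1))))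
    (hMloc : ∀ K : Set (EuclideanSpace ℝ (Fin (n+1))), IsCompact K → μH[(n:ℝ)] (M ∩ K) < ⊤) :
    Set.Countable
      {x : EuclideanSpace ℝ (Fin (n+1)) |
        x ∈ M ∧ ∃ R : ℝ, 0 < R ∧ 0 < μH[(n:ℝ)] (M ∩ sphere x R)} := by
  set D := {x : EuclideanSpace ℝ (Fin (n+1)) |
        x ∈ M ∧ ∃ R : ℝ, 0 < R ∧ 0 < μH[(n:ℝ)] (M ∩ sphere x R)} with hD
  set ν : Measure (EuclideanSpace ℝ (Fin (n+1))) := μH[(n:ℝ)].restrict M with hν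
  haveI : SigmaFinite ν := by
    refine ⟨⟨⟨fun k => closedBall 0 k, fun _ => trivial, fun k => ?_, ?_⟩⟩⟩
    · rw [hν, Measure.restrict_apply measurableSet_closedBall, inter_comm]
      exact hMloc _ (isCompact_closedBall _ _)
    · exact iUnion_closedBall_nat _
  have hR : ∀ i : D, ∃ R : ℝ, 0 < R ∧ 0 < μH[(n:ℝ)] (M ∩ sphere (i:EuclideanSpace ℝ (Fin (n+1))) R) :=
    fun i => i.2.2
  choose R hRpos hRmeas using hR
  set As : D → Set (EuclideanSpace ℝ (Fin (n+1))) := fun i => sphere (i : EuclideanSpace ℝ (Fin (n+1))) (R i) with hAs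
  have hcnt : Set.Countable {i : D | 0 < ν (As i)} := by
    apply Measure.countable_meas_pos_of_disjoint_iUnion₀
      (fun i => (isClosed_sphere.measurableSet).nullMeasurableSet)
    intro i j hij
    have hxy : (i : EuclideanSpace ℝ (Fin (n+1))) ≠ (j : EuclideanSpace ℝ (Fin (n+1))) :=
      fun h => hij (Subtype.ext h)
    have : ν (As i ∩ As j) = 0 := by
      refine le_antisymm ?_ (zero_le)
      calc ν (As i ∩ As j) ≤ μH[(n:ℝ)] (As i ∩ As j) := Measure.restrict_apply_le _ _
        _ = 0 := sphere_inter_sphere_null n hn hxy _ _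
    exact this
  have hall : {i : D | 0 < ν (As i)} = univ := by
    ext i
    simp only [mem_setOf_eq, mem_univ, iff_true]
    rw [hν, Measure.restrict_apply isClosed_sphere.measurableSet, inter_comm]
    exact hRmeas i
  rw [hall] at hcnt
  have : Countable D := countable_univ_iff.mp hcnt
  exact countable_coe_iff.mp this
end

section
/- Let n ≥ 1 be an integer. For every open convex set Ω ⊂ ℝ^{n+1}, every x ∈ ∂Ω, and every R > 0, one has μH[n](∂Ω ∩ B_R(x)) ≤ |𝕊^n| · R^n, where |𝕊^n| is the n-dimensional Hausdorff measure of the unit sphere {z ∈ ℝ^{n+1} : |z| = 1}. -/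
open MeasureTheory Set Filter Metric
open scoped ENNReal NNReal RealInnerProductSpace Pointwise

variable {F : Type*} [NormedAddCommGroup F] [InnerProductSpace ℝ F]

lemma proj_contract' {y₁ y₂ p₁ p₂ : F}
    (h₁ : ⟪y₁ - p₁, p₂ - p₁⟫ ≤ 0) (h₂ : ⟪y₂ - p₂, p₁ - p₂⟫ ≤ 0) :
    ‖p₁ - p₂‖ ≤ ‖y₁ - y₂‖ := by
  have key : ‖p₁ - p₂‖ ^ 2 ≤ ⟪y₁ - y₂, p₁ - p₂⟫ := by
    have e : ⟪y₁ - y₂, p₁ - p₂⟫ - ‖p₁ - p₂‖ ^ 2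
        = ⟪y₁ - p₁, p₁ - p₂⟫ - ⟪y₂ - p₂, p₁ - p₂⟫ := by
      rw [← @real_inner_self_eq_norm_sq]
      rw [← inner_sub_left, ← inner_sub_left]
      congr 1
      abel
    have h₁' : (0:ℝ) ≤ ⟪y₁ - p₁, p₁ - p₂⟫ := by
      have := h₁
      rw [show p₂ - p₁ = -(p₁ - p₂) by abel, inner_neg_right] at this
      linarith
    linarith
  rcases eq_or_lt_of_le (norm_nonneg (p₁ - p₂)) with h0 | h0
  · rw [← h0]; exact norm_nonneg _
  · have cs := real_inner_le_norm (y₁ - y₂) (p₁ - p₂)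
    nlinarith [sq_nonneg ‖p₁ - p₂‖]

/-- Perimeter bound for convex sets at all scales:
`|∂Ω ∩ B_R(x)| ≤ |𝕊^n| R^n` for every open convex `Ω ⊂ ℝ^{n+1}`, `x ∈ ∂Ω`, `R > 0`. -/
theorem convex_boundary_ball_measure_bound
    (n : ℕ) (hn : 1 ≤ n)
    (Ω : Set (EuclideanSpace ℝ (Fin (n+1))))
    (hΩo : IsOpen Ω) (hΩc : Convex ℝ Ω)
    (x : EuclideanSpace ℝ (Fin (n+1))) (hx : x ∈ frontier Ω)
    (R : ℝ) (hR : 0 < R) :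
    μH[(n:ℝ)] (frontier Ω ∩ ball x R)
      ≤ μH[(n:ℝ)] (sphere (0 : EuclideanSpace ℝ (Fin (n+1))) 1) * ENNReal.ofReal (R ^ n) := by
  -- Ω is nonempty
  have hΩne : Ω.Nonempty := by
    by_contra h
    rw [not_nonempty_iff_eq_empty] at h
    simp [h] at hx
  set K := closure Ω with hKdef
  have hKconv : Convex ℝ K := hΩc.closure
  have hKne : K.Nonempty := hΩne.closure
  have hKcompl : IsComplete K := isClosed_closure.isComplete
  -- the metric projection onto K
  have hex : ∀ u : EuclideanSpace ℝ (Fin (n+1)), ∃ v ∈ K, ‖u - v‖ = ⨅ w : K, ‖u - w‖ :=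
    exists_norm_eq_iInf_of_complete_convex hKne hKcompl hKconv
  choose p hpK hpmin using hex
  have hchar : ∀ u, ∀ w ∈ K, ⟪u - p u, w - p u⟫ ≤ 0 := fun u =>
    (norm_eq_iInf_iff_real_inner_le_zero hKconv (hpK u)).1 (hpmin u)
  have hlip : LipschitzWith 1 p := by
    refine LipschitzWith.of_dist_le_mul fun y₁ y₂ => ?_
    rw [NNReal.coe_one, one_mul, dist_eq_norm, dist_eq_norm]
    exact proj_contract' (hchar y₁ (p y₂) (hpK y₂)) (hchar y₂ (p y₁) (hpK y₁))
  -- surjectivity onto the frontier piece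
  have hsubset : frontier Ω ∩ ball x R ⊆ p '' sphere x R := by
    rintro z ⟨hzf, hzb⟩
    have hzK : z ∈ K := hzf.1
    have hznΩ : z ∉ Ω := fun h => hzf.2 (by rwa [hΩo.interior_eq])
    obtain ⟨f, hf⟩ := geometric_hahn_banach_open_point hΩc hΩo hznΩ
    -- f ≤ f z on K
    have hfK : ∀ w ∈ K, f w ≤ f z := by
      intro w hw
      have : K ⊆ {w | f w ≤ f z} :=
        closure_minimal (fun a ha => (hf a ha).le) (isClosed_le f.continuous continuous_const)
      exact this hw
    set ν := (InnerProductSpace.toDual ℝ (EuclideanSpace ℝ (Fin (n+1)))).symm f with hν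
    have hinner : ∀ w, ⟪ν, w⟫ = f w := fun w => InnerProductSpace.toDual_symm_apply
    have hνne : ν ≠ 0 := by
      obtain ⟨a₀, ha₀⟩ := hΩne
      intro h0
      have e1 := hinner a₀
      have e2 := hinner z
      rw [h0, inner_zero_left] at e1 e2
      have := hf a₀ ha₀
      rw [← e1, ← e2] at this
      exact lt_irrefl _ this
    -- find t ≥ 0 with ‖z + t • ν - x‖ = R
    have hcont : ContinuousOn (fun t : ℝ => ‖z + t • ν - x‖) (Icc 0 (2*R/‖ν‖)) := by
      fun_prop
    have hνpos : 0 < ‖ν‖ := norm_pos_iff.2 hνne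
    have h0v : ‖z + (0:ℝ) • ν - x‖ < R := by
      simpa using mem_ball_iff_norm.1 hzb
    have hTv : R ≤ ‖z + (2*R/‖ν‖) • ν - x‖ := by
      have : ‖(2*R/‖ν‖) • ν‖ - ‖z - x‖ ≤ ‖z + (2*R/‖ν‖) • ν - x‖ := by
        have := norm_sub_norm_le ((2*R/‖ν‖) • ν) (x - z)
        rw [show (2*R/‖ν‖) • ν - (x - z) = z + (2*R/‖ν‖) • ν - x by abel] at this
        linarith [this, norm_sub_rev x z]
      have h1 : ‖(2*R/‖ν‖) • ν‖ = 2*R := by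
        rw [norm_smul, Real.norm_eq_abs, abs_of_pos (by positivity), div_mul_cancel₀]
        exact hνpos.ne'
      have h2 : ‖z - x‖ < R := by simpa using h0v
      linarith
    have hT : (0:ℝ) ≤ 2*R/‖ν‖ := by positivity
    obtain ⟨t, ht, htv⟩ := intermediate_value_Icc hT hcont ⟨h0v.le, hTv⟩
    set y := z + t • ν with hy
    have hys : y ∈ sphere x R := by
      rw [mem_sphere, dist_eq_norm]; exact htv
    refine ⟨y, hys, ?_⟩
    -- z is a minimizer for y, hence p y = z by uniqueness
    have hzchar : ∀ w ∈ K, ⟪y - z, w - z⟫ ≤ 0 := by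
      intro w hw
      have : y - z = t • ν := by rw [hy]; abel
      rw [this, real_inner_smul_left, inner_sub_right, hinner, hinner]
      have := hfK w hw
      have ht0 : 0 ≤ t := ht.1
      nlinarith
    have hle := proj_contract' (hchar y z hzK) (hzchar (p y) (hpK y))
    simp only [sub_self, norm_zero] at hle
    have h0 : ‖p y - z‖ = 0 := le_antisymm hle (norm_nonneg _)
    exact sub_eq_zero.1 (norm_eq_zero.1 h0)
  have hd0 : (0:ℝ) ≤ (n:ℝ) := Nat.cast_nonneg n
  have hcoe : (((‖R‖₊ ^ ((n:ℕ):ℝ)) : ℝ≥0) : ℝ≥0∞) = ENNReal.ofReal (R ^ n) := by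
    rw [NNReal.rpow_natCast, Real.nnnorm_of_nonneg hR.le, ENNReal.ofReal,
      Real.toNNReal_pow hR.le, Real.toNNReal_of_nonneg hR.le]
  have hball : μH[(n:ℝ)] (sphere x R)
      = μH[(n:ℝ)] (sphere (0 : EuclideanSpace ℝ (Fin (n+1))) 1) * ENNReal.ofReal (R ^ n) := by
    have e1 : sphere x R
        = x +ᵥ (R • sphere (0 : EuclideanSpace ℝ (Fin (n+1))) 1) := by
      rw [smul_sphere' hR.ne', smul_zero, mul_one, Metric.vadd_sphere, vadd_eq_add, add_zero,
        Real.norm_of_nonneg hR.le]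
    rw [e1, MeasureTheory.hausdorffMeasure_vadd _ (Or.inl hd0) _,
      MeasureTheory.Measure.hausdorffMeasure_smul₀ hd0 hR.ne', ENNReal.smul_def,
      smul_eq_mul, ← hcoe, mul_comm]
  calc μH[(n:ℝ)] (frontier Ω ∩ ball x R)
      ≤ μH[(n:ℝ)] (p '' sphere x R) := measure_mono hsubset
    _ ≤ (1:ℝ≥0) ^ (n:ℝ) * μH[(n:ℝ)] (sphere x R) :=
        hlip.hausdorffMeasure_image_le hd0 _
    _ = μH[(n:ℝ)] (sphere (0 : EuclideanSpace ℝ (Fin (n+1))) 1) * ENNReal.ofReal (R ^ n) := by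
        rw [hball]; simp
end

section
/- Let n ≥ 1 be an integer, s ∈ (0,1), and let M ⊂ ℝ^{n+1} be a Borel set such that the restriction of the n-dimensional Hausdorff measure μH[n] to M is σ-finite (for instance, M the boundary of an open convex set). Let u : M → ℝ be a μH[n]-measurable function. Then (1/2) ∫_M ∫_M |u(x) − u(y)| / |x − y|^{n+s} dx dy = ∫_{−∞}^{+∞} Per_{M,s}({x ∈ M : u(x) > t}) dt, with both sides taken in [0, +∞] and the outer integral on the right with respect to Lebesgue measure on ℝ. -/
open MeasureTheory Set Filter Metric
open scoped ENNReal NNReal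

/-- The fractional `s`-perimeter of `F` relative to `M ⊂ ℝ^{n+1}`. -/
noncomputable def fracPerimeterIn (n : ℕ) (s : ℝ)
    (M F : Set (EuclideanSpace ℝ (Fin (n+1)))) : ℝ≥0∞ :=
  ∫⁻ x in F, ∫⁻ y in M \ F, ENNReal.ofReal (dist x y ^ (-((n:ℝ) + s)))
    ∂μH[(n:ℝ)] ∂μH[(n:ℝ)]

private lemma ofReal_abs_split' (a b : ℝ) :
    ENNReal.ofReal |a - b| = ENNReal.ofReal (a - b) + ENNReal.ofReal (b - a) := by
  rcases le_total b a with h | h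
  · rw [abs_of_nonneg (by linarith), ENNReal.ofReal_of_nonpos (by linarith : b - a ≤ 0), add_zero]
  · rw [abs_of_nonpos (by linarith), ENNReal.ofReal_of_nonpos (by linarith : a - b ≤ 0), zero_add,
      neg_sub]

private lemma ofReal_div_rpow' (a b d p : ℝ) (hd : 0 ≤ d) (hp : 0 < p) :
    ENNReal.ofReal (|a - b| / d ^ p)
      = ENNReal.ofReal (a - b) * ENNReal.ofReal (d ^ (-p))
        + ENNReal.ofReal (b - a) * ENNReal.ofReal (d ^ (-p)) := by
  rcases eq_or_lt_of_le hd with h0 | h0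
  · rw [← h0, Real.zero_rpow hp.ne', Real.zero_rpow (neg_ne_zero.mpr hp.ne')]
    simp
  · rw [Real.rpow_neg hd, div_eq_mul_inv, ENNReal.ofReal_mul (abs_nonneg _),
      ofReal_abs_split', add_mul]

/-- Fractional coarea formula on hypersurfaces of `ℝ^{n+1}`. -/
theorem fractional_coarea_formula
    (n : ℕ) (hn : 1 ≤ n) (s : ℝ) (hs : s ∈ Set.Ioo (0:ℝ) 1)
    (M : Set (EuclideanSpace ℝ (Fin (n+1)))) (hM : MeasurableSet M)
    (hσfin : SigmaFinite (μH[(n:ℝ)].restrict M))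
    (u : EuclideanSpace ℝ (Fin (n+1)) → ℝ) (hu : Measurable u) :
    (1/2) * ∫⁻ x in M, ∫⁻ y in M,
        ENNReal.ofReal (|u x - u y| / dist x y ^ ((n:ℝ) + s)) ∂μH[(n:ℝ)] ∂μH[(n:ℝ)]
      = ∫⁻ t : ℝ, fracPerimeterIn n s M {x | x ∈ M ∧ u x > t} ∂volume := by
  obtain ⟨hs0, hs1⟩ := hs
  have hp : (0:ℝ) < (n:ℝ) + s := by positivity
  set μ : Measure (EuclideanSpace ℝ (Fin (n+1))) := μH[(n:ℝ)].restrict M with hμ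
  haveI : SigmaFinite μ := hσfin
  set K : EuclideanSpace ℝ (Fin (n+1)) × EuclideanSpace ℝ (Fin (n+1)) → ℝ≥0∞ :=
    fun q => ENNReal.ofReal (dist q.1 q.2 ^ (-((n:ℝ) + s))) with hK
  have hKmeas : Measurable K := by
    apply ENNReal.measurable_ofReal.comp
    measurability
  have husub : Measurable fun q : EuclideanSpace ℝ (Fin (n+1)) × EuclideanSpace ℝ (Fin (n+1)) =>
      u q.1 - u q.2 := (hu.comp measurable_fst).sub (hu.comp measurable_snd)
  set f1 : EuclideanSpace ℝ (Fin (n+1)) × EuclideanSpace ℝ (Fin (n+1)) → ℝ≥0∞ :=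
    fun q => ENNReal.ofReal (u q.1 - u q.2) * K q with hf1
  set f2 : EuclideanSpace ℝ (Fin (n+1)) × EuclideanSpace ℝ (Fin (n+1)) → ℝ≥0∞ :=
    fun q => ENNReal.ofReal (u q.2 - u q.1) * K q with hf2
  have hf1m : Measurable f1 := husub.ennreal_ofReal.mul hKmeas
  have hf2m : Measurable f2 := by
    apply Measurable.mul _ hKmeas
    exact ((hu.comp measurable_snd).sub (hu.comp measurable_fst)).ennreal_ofReal
  -- LHS as integral over the product measure
  have hLHS : ∫⁻ x in M, ∫⁻ y in M,
      ENNReal.ofReal (|u x - u y| / dist x y ^ ((n:ℝ) + s)) ∂μH[(n:ℝ)] ∂μH[(n:ℝ)]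
      = ∫⁻ q, (f1 q + f2 q) ∂(μ.prod μ) := by
    rw [lintegral_prod (fun q => f1 q + f2 q) ((hf1m.add hf2m).aemeasurable)]
    refine lintegral_congr fun x => lintegral_congr fun y => ?_
    exact ofReal_div_rpow' (u x) (u y) (dist x y) _ dist_nonneg hp
  -- symmetry: ∫ f2 = ∫ f1
  have hsym : ∫⁻ q, f2 q ∂(μ.prod μ) = ∫⁻ q, f1 q ∂(μ.prod μ) := by
    have h1 : ∀ q : EuclideanSpace ℝ (Fin (n+1)) × EuclideanSpace ℝ (Fin (n+1)),
        f2 q = f1 (Prod.swap q) := by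
      intro q; simp only [hf1, hf2, hK, Prod.fst_swap, Prod.snd_swap, dist_comm]
    calc ∫⁻ q, f2 q ∂(μ.prod μ) = ∫⁻ q, f1 (Prod.swap q) ∂(μ.prod μ) :=
          lintegral_congr h1
      _ = ∫⁻ q, f1 q ∂(Measure.map Prod.swap (μ.prod μ)) :=
          (lintegral_map hf1m measurable_swap).symm
      _ = ∫⁻ q, f1 q ∂(μ.prod μ) := by rw [Measure.prod_swap]
  -- the layer-cake set
  set S : Set (ℝ × (EuclideanSpace ℝ (Fin (n+1)) × EuclideanSpace ℝ (Fin (n+1)))) :=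
    {q | u q.2.2 ≤ q.1 ∧ q.1 < u q.2.1} with hS
  have hSm : MeasurableSet S := by
    have h1 : MeasurableSet {q : ℝ × (EuclideanSpace ℝ (Fin (n+1)) × EuclideanSpace ℝ (Fin (n+1))) |
        u q.2.2 ≤ q.1} := by
      apply measurableSet_le _ measurable_fst
      exact hu.comp (measurable_snd.snd)
    have h2 : MeasurableSet {q : ℝ × (EuclideanSpace ℝ (Fin (n+1)) × EuclideanSpace ℝ (Fin (n+1))) |
        q.1 < u q.2.1} := by
      apply measurableSet_lt measurable_fst
      exact hu.comp (measurable_snd.fst)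
    exact h1.inter h2
  set G : ℝ × (EuclideanSpace ℝ (Fin (n+1)) × EuclideanSpace ℝ (Fin (n+1))) → ℝ≥0∞ :=
    S.indicator (fun q => K q.2) with hG
  have hGm : Measurable G := (hKmeas.comp measurable_snd).indicator hSm
  -- identification of the perimeter for each t
  have hper : ∀ t : ℝ, fracPerimeterIn n s M {x | x ∈ M ∧ u x > t}
      = ∫⁻ q, G (t, q) ∂(μ.prod μ) := by
    intro t
    have hF : {x : EuclideanSpace ℝ (Fin (n+1)) | x ∈ M ∧ u x > t} = {x | t < u x} ∩ M := by
      ext x; simp [and_comm]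
    have hFc : M \ {x : EuclideanSpace ℝ (Fin (n+1)) | x ∈ M ∧ u x > t} = {y | u y ≤ t} ∩ M := by
      ext y
      simp only [mem_diff, mem_setOf_eq, mem_inter_iff, not_and, gt_iff_lt, not_lt]
      constructor
      · rintro ⟨hy, h⟩; exact ⟨h hy, hy⟩
      · rintro ⟨h, hy⟩; exact ⟨hy, fun _ => h⟩
    have hA : MeasurableSet {x : EuclideanSpace ℝ (Fin (n+1)) | t < u x} :=
      hu (measurableSet_Ioi : MeasurableSet (Set.Ioi t))
    have hB : MeasurableSet {y : EuclideanSpace ℝ (Fin (n+1)) | u y ≤ t} :=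
      hu (measurableSet_Iic : MeasurableSet (Set.Iic t))
    have e1 : μH[(n:ℝ)].restrict ({x : EuclideanSpace ℝ (Fin (n+1)) | t < u x} ∩ M)
        = μ.restrict {x | t < u x} := (Measure.restrict_restrict hA).symm
    have e2 : μH[(n:ℝ)].restrict ({y : EuclideanSpace ℝ (Fin (n+1)) | u y ≤ t} ∩ M)
        = μ.restrict {y | u y ≤ t} := (Measure.restrict_restrict hB).symm
    have hGind : ∀ q : EuclideanSpace ℝ (Fin (n+1)) × EuclideanSpace ℝ (Fin (n+1)), G (t, q)
        = (({x | t < u x} : Set (EuclideanSpace ℝ (Fin (n+1)))) ×ˢ {y | u y ≤ t}).indicator K q := by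
      intro q
      simp only [hG, Set.indicator_apply, hS, mem_setOf_eq, Set.mem_prod, and_comm]
    calc fracPerimeterIn n s M {x | x ∈ M ∧ u x > t}
        = ∫⁻ x in {x : EuclideanSpace ℝ (Fin (n+1)) | t < u x},
            ∫⁻ y in {y : EuclideanSpace ℝ (Fin (n+1)) | u y ≤ t}, K (x, y) ∂μ ∂μ := by
          unfold fracPerimeterIn
          rw [hFc, hF, e1, e2]
      _ = ∫⁻ q in (({x | t < u x} : Set (EuclideanSpace ℝ (Fin (n+1)))) ×ˢ {y | u y ≤ t}),
            K q ∂(μ.prod μ) := by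
          rw [← Measure.prod_restrict, lintegral_prod _ hKmeas.aemeasurable]
      _ = ∫⁻ q, (({x | t < u x} : Set (EuclideanSpace ℝ (Fin (n+1)))) ×ˢ {y | u y ≤ t}).indicator
            K q ∂(μ.prod μ) := (lintegral_indicator (hA.prod hB) K).symm
      _ = ∫⁻ q, G (t, q) ∂(μ.prod μ) := lintegral_congr fun q => (hGind q).symm
  -- layer cake for fixed pair q
  have hlayer : ∀ q : EuclideanSpace ℝ (Fin (n+1)) × EuclideanSpace ℝ (Fin (n+1)),
      ∫⁻ t : ℝ, G (t, q) ∂volume = f1 q := by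
    intro q
    have h1 : ∀ t : ℝ, G (t, q) = (Set.Ico (u q.2) (u q.1)).indicator (fun _ => K q) t := by
      intro t
      simp only [hG, Set.indicator_apply, hS, mem_setOf_eq, Set.mem_Ico]
    calc ∫⁻ t : ℝ, G (t, q) ∂volume
        = ∫⁻ t in Set.Ico (u q.2) (u q.1), K q ∂volume := by
          rw [← lintegral_indicator measurableSet_Ico]
          exact lintegral_congr h1
      _ = K q * volume (Set.Ico (u q.2) (u q.1)) := by
          rw [setLIntegral_const]
      _ = f1 q := by
          rw [Real.volume_Ico, hf1, mul_comm]
  -- put everything together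
  have hRHS : ∫⁻ t : ℝ, fracPerimeterIn n s M {x | x ∈ M ∧ u x > t} ∂volume
      = ∫⁻ q, f1 q ∂(μ.prod μ) := by
    calc ∫⁻ t : ℝ, fracPerimeterIn n s M {x | x ∈ M ∧ u x > t} ∂volume
        = ∫⁻ t : ℝ, ∫⁻ q, G (t, q) ∂(μ.prod μ) ∂volume := lintegral_congr hper
      _ = ∫⁻ q, ∫⁻ t : ℝ, G (t, q) ∂volume ∂(μ.prod μ) :=
          lintegral_lintegral_swap hGm.aemeasurable
      _ = ∫⁻ q, f1 q ∂(μ.prod μ) := lintegral_congr hlayer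
  rw [hLHS, hRHS, lintegral_add_left hf1m, hsym, ← two_mul, ← mul_assoc]
  rw [show (1/2 : ℝ≥0∞) * 2 = 1 by
    rw [one_div, ENNReal.inv_mul_cancel two_ne_zero ENNReal.ofNat_ne_top]]
  rw [one_mul]
end

section
/- Let n ≥ 1 be an integer, s ∈ (0,1), p ≥ 1 with sp < n, and N ∈ ℤ. Let (a_i)_{i∈ℤ} be a bounded, non-negative, non-increasing sequence of real numbers (a_{i+1} ≤ a_i for all i) with a_i = 0 for all i ≥ N. Then Σ_{i∈ℤ} 2^{pi} a_i^{(n−sp)/n} ≤ 2^{p*_s} · Σ_{i∈ℤ, a_i ≠ 0} 2^{pi} a_i^{−sp/n} a_{i+1}, where p*_s := np/(n − sp); both series converge. -/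
open scoped BigOperators ENNReal NNReal

/-- Discrete lemma (Di Nezza-Palatucci-Valdinoci): for a bounded non-negative
non-increasing sequence `(a_i)_{i∈ℤ}` vanishing for `i ≥ N`,
`Σ 2^{pi} a_i^{(n-sp)/n} ≤ 2^{p*_s} Σ_{a_i ≠ 0} 2^{pi} a_i^{-sp/n} a_{i+1}`,
and both series converge. -/
theorem discrete_sum_lemma
    (n : ℕ) (hn : 1 ≤ n) (s p : ℝ) (hs : s ∈ Set.Ioo (0:ℝ) 1) (hp : 1 ≤ p)
    (hsp : s * p < n) (N : ℤ) (a : ℤ → ℝ)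
    (hbdd : ∃ B : ℝ, ∀ i : ℤ, a i ≤ B)
    (hnonneg : ∀ i : ℤ, 0 ≤ a i)
    (hmono : ∀ i : ℤ, a (i + 1) ≤ a i)
    (hvanish : ∀ i : ℤ, N ≤ i → a i = 0) :
    Summable (fun i : ℤ => (2:ℝ) ^ (p * (i:ℝ)) * a i ^ (((n:ℝ) - s * p) / (n:ℝ)))
    ∧ Summable (fun i : ℤ =>
        if a i ≠ 0 then (2:ℝ) ^ (p * (i:ℝ)) * a i ^ (-(s * p) / (n:ℝ)) * a (i + 1) else 0)
    ∧ (∑' i : ℤ, (2:ℝ) ^ (p * (i:ℝ)) * a i ^ (((n:ℝ) - s * p) / (n:ℝ)))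
        ≤ (2:ℝ) ^ ((n:ℝ) * p / ((n:ℝ) - s * p)) *
            ∑' i : ℤ,
              if a i ≠ 0 then (2:ℝ) ^ (p * (i:ℝ)) * a i ^ (-(s * p) / (n:ℝ)) * a (i + 1)
              else 0 := by
  obtain ⟨hs0, hs1⟩ := hs
  obtain ⟨B, hB⟩ := hbdd
  have hp0 : (0:ℝ) < p := lt_of_lt_of_le one_pos hp
  have hn0 : (0:ℝ) < n := by exact_mod_cast hn
  have hsp0 : 0 < s * p := mul_pos hs0 hp0
  set β : ℝ := ((n:ℝ) - s * p) / (n:ℝ) with hβdef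
  set θ : ℝ := s * p / (n:ℝ) with hθdef
  have hθeq : -(s * p) / (n:ℝ) = -θ := by rw [neg_div]
  have hβ0 : 0 < β := div_pos (by linarith) hn0
  have hθ0 : 0 < θ := div_pos hsp0 hn0
  have hβθ : β + θ = 1 := by
    rw [hβdef, hθdef]; field_simp; ring
  have hβ1 : β < 1 := by linarith
  set f : ℤ → ℝ := fun i : ℤ => (2:ℝ) ^ (p * (i:ℝ)) * a i ^ β with hfdef
  set g : ℤ → ℝ := fun i : ℤ =>
    if a i ≠ 0 then (2:ℝ) ^ (p * (i:ℝ)) * a i ^ (-(s * p) / (n:ℝ)) * a (i + 1) else 0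
    with hgdef
  have hf0 : ∀ i, 0 ≤ f i := fun i => by
    have := hnonneg i; positivity
  have hg0 : ∀ i, 0 ≤ g i := fun i => by
    rw [hgdef]
    dsimp only
    split
    · have h1 := hnonneg i; have h2 := hnonneg (i+1); positivity
    · exact le_rfl
  -- bound on terms of f
  have hfb : ∀ i : ℤ, f i ≤ (2:ℝ) ^ (p * (i:ℝ)) * (max B 0) ^ β := by
    intro i
    have h1 : a i ^ β ≤ (max B 0) ^ β :=
      Real.rpow_le_rpow (hnonneg i) (le_trans (hB i) (le_max_left _ _)) hβ0.le
    have h2 : (0:ℝ) < (2:ℝ) ^ (p * (i:ℝ)) := Real.rpow_pos_of_pos two_pos _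
    exact mul_le_mul_of_nonneg_left h1 h2.le
  -- summability of f
  have hfvanish : ∀ i : ℤ, N ≤ i → f i = 0 := by
    intro i hi
    rw [hfdef]
    dsimp only
    rw [hvanish i hi, Real.zero_rpow hβ0.ne', mul_zero]
  have hsumf : Summable f := by
    apply Summable.of_nat_of_neg
    · apply summable_of_ne_finset_zero (s := Finset.range N.toNat)
      intro k hk
      apply hfvanish
      have : N.toNat ≤ k := by simpa using hk
      calc N ≤ (N.toNat : ℤ) := Int.self_le_toNat N
        _ ≤ (k : ℤ) := by exact_mod_cast this
    · have hr : (2:ℝ) ^ (-p) < 1 :=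
        Real.rpow_lt_one_of_one_lt_of_neg one_lt_two (by linarith)
      have hgeo : Summable (fun k : ℕ => (max B 0) ^ β * ((2:ℝ) ^ (-p)) ^ k) :=
        (summable_geometric_of_lt_one (by positivity) hr).mul_left _
      refine Summable.of_nonneg_of_le (fun k => hf0 _) (fun k => ?_) hgeo
      have h1 := hfb (-(k:ℤ))
      have h2 : (2:ℝ) ^ (p * ((-(k:ℤ) : ℤ) : ℝ)) = ((2:ℝ) ^ (-p)) ^ k := by
        rw [← Real.rpow_natCast ((2:ℝ) ^ (-p)) k, ← Real.rpow_mul (by norm_num)]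
        push_cast
        ring_nf
      rw [h2] at h1
      calc f (-(k:ℤ)) ≤ ((2:ℝ) ^ (-p)) ^ k * (max B 0) ^ β := h1
        _ = (max B 0) ^ β * ((2:ℝ) ^ (-p)) ^ k := by ring
  -- pointwise bound g ≤ f, giving summability of g
  have hgf : ∀ i, g i ≤ f i := by
    intro i
    rw [hgdef, hfdef]
    dsimp only
    split
    · rename_i hne
      have hai : 0 < a i := lt_of_le_of_ne (hnonneg i) (Ne.symm hne)
      have h1 : a i ^ (-(s*p)/(n:ℝ)) * a (i+1) ≤ a i ^ β := by
        rw [hθeq]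
        calc a i ^ (-θ) * a (i+1) ≤ a i ^ (-θ) * a i :=
              mul_le_mul_of_nonneg_left (hmono i) (Real.rpow_nonneg hai.le _)
          _ = a i ^ (-θ) * a i ^ (1:ℝ) := by rw [Real.rpow_one]
          _ = a i ^ (-θ + 1) := (Real.rpow_add hai _ _).symm
          _ = a i ^ β := by rw [show -θ + 1 = β by linarith]
      have h2 : (0:ℝ) < (2:ℝ) ^ (p * (i:ℝ)) := Real.rpow_pos_of_pos two_pos _
      calc (2:ℝ) ^ (p * (i:ℝ)) * a i ^ (-(s*p)/(n:ℝ)) * a (i+1)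
          = (2:ℝ) ^ (p * (i:ℝ)) * (a i ^ (-(s*p)/(n:ℝ)) * a (i+1)) := by ring
        _ ≤ (2:ℝ) ^ (p * (i:ℝ)) * a i ^ β := mul_le_mul_of_nonneg_left h1 h2.le
    · exact mul_nonneg (by positivity) (Real.rpow_nonneg (hnonneg i) _)
  have hsumg : Summable g := Summable.of_nonneg_of_le hg0 hgf hsumf
  refine ⟨hsumf, hsumg, ?_⟩
  -- key real identity
  have hkey : ∀ i : ℤ, f (i+1) = (2:ℝ) ^ p * (g i ^ β * f i ^ θ) := by
    intro i
    by_cases hne : a i ≠ 0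
    · have hai : 0 < a i := lt_of_le_of_ne (hnonneg i) (Ne.symm hne)
      set x : ℝ := (2:ℝ) ^ (p * (i:ℝ)) with hxdef
      have hx : 0 < x := Real.rpow_pos_of_pos two_pos _
      have e0 : x ^ β * x ^ θ = x := by
        rw [← Real.rpow_add hx, hβθ, Real.rpow_one]
      have e1 : (a i ^ (-θ)) ^ β * (a i ^ β) ^ θ = 1 := by
        rw [← Real.rpow_mul hai.le, ← Real.rpow_mul hai.le, ← Real.rpow_add hai,
          show -θ * β + β * θ = 0 by ring, Real.rpow_zero]
      have hgi : g i = x * a i ^ (-θ) * a (i+1) := by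
        rw [hgdef]; dsimp only; rw [if_pos hne, hθeq]
      have hmul : g i ^ β * f i ^ θ = x * a (i+1) ^ β := by
        rw [hgi, hfdef]
        dsimp only
        rw [Real.mul_rpow (by positivity) (hnonneg (i+1)),
          Real.mul_rpow hx.le (Real.rpow_nonneg hai.le _),
          Real.mul_rpow hx.le (Real.rpow_nonneg hai.le _)]
        calc x ^ β * (a i ^ (-θ)) ^ β * a (i+1) ^ β * (x ^ θ * (a i ^ β) ^ θ)
            = (x ^ β * x ^ θ) * ((a i ^ (-θ)) ^ β * (a i ^ β) ^ θ) * a (i+1) ^ β := by ring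
          _ = x * 1 * a (i+1) ^ β := by rw [e0, e1]
          _ = x * a (i+1) ^ β := by ring
      rw [hmul, hfdef]
      dsimp only
      rw [hxdef]
      rw [show p * (((i+1 : ℤ)) : ℝ) = p + p * (i:ℝ) by push_cast; ring,
        Real.rpow_add two_pos]
      ring
    · push_neg at hne
      have hai1 : a (i+1) = 0 := le_antisymm (hne ▸ hmono i) (hnonneg (i+1))
      have hgi : g i = 0 := by rw [hgdef]; dsimp only; rw [if_neg (by simpa using hne)]
      rw [hgi, hfdef]
      dsimp only
      rw [hne, hai1]
      simp [Real.zero_rpow hβ0.ne', Real.zero_rpow hθ0.ne']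
  -- move to ℝ≥0∞
  set F : ℤ → ℝ≥0∞ := fun i => ENNReal.ofReal (f i) with hFdef
  set G : ℤ → ℝ≥0∞ := fun i => ENNReal.ofReal (g i) with hGdef
  set S : ℝ≥0∞ := ∑' i, F i with hSdef
  set R : ℝ≥0∞ := ∑' i, G i with hRdef
  have hSeq : S = ENNReal.ofReal (∑' i, f i) :=
    (ENNReal.ofReal_tsum_of_nonneg hf0 hsumf).symm ▸ rfl
  have hReq : R = ENNReal.ofReal (∑' i, g i) :=
    (ENNReal.ofReal_tsum_of_nonneg hg0 hsumg).symm ▸ rfl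
  have hS_top : S ≠ ⊤ := by rw [hSeq]; exact ENNReal.ofReal_ne_top
  -- ENNReal key identity
  have hkeyE : ∀ i : ℤ, F (i+1) = ENNReal.ofReal ((2:ℝ) ^ p) * (G i ^ β * F i ^ θ) := by
    intro i
    rw [hFdef, hGdef]
    dsimp only
    rw [hkey i, ENNReal.ofReal_mul (by positivity),
      ENNReal.ofReal_mul (Real.rpow_nonneg (hg0 i) _),
      ENNReal.ofReal_rpow_of_nonneg (hg0 i) hβ0.le,
      ENNReal.ofReal_rpow_of_nonneg (hf0 i) hθ0.le]
  -- shift invariance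
  have hshift : ∑' i : ℤ, F (i+1) = S := by
    rw [hSdef]
    exact (Equiv.addRight (1:ℤ)).tsum_eq F
  -- Hölder
  have hpq : (1/β).HolderConjugate (1/θ) := by
    constructor
    · simp only [one_div, inv_inv, inv_one]; exact hβθ
    · positivity
    · positivity
  have holder : ∑' i : ℤ, (G i ^ β) * (F i ^ θ) ≤ R ^ β * S ^ θ := by
    have h := ENNReal.lintegral_mul_le_Lp_mul_Lq (MeasureTheory.Measure.count) hpq
      (measurable_from_top (f := fun i : ℤ => G i ^ β)).aemeasurable
      (measurable_from_top (f := fun i : ℤ => F i ^ θ)).aemeasurable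
    simp only [MeasureTheory.lintegral_count, Pi.mul_apply] at h
    have e2 : ∀ i : ℤ, (G i ^ β) ^ (1/β) = G i := by
      intro i
      rw [← ENNReal.rpow_mul, mul_one_div_cancel hβ0.ne', ENNReal.rpow_one]
    have e3 : ∀ i : ℤ, (F i ^ θ) ^ (1/θ) = F i := by
      intro i
      rw [← ENNReal.rpow_mul, mul_one_div_cancel hθ0.ne', ENNReal.rpow_one]
    simp only [e2, e3, one_div_one_div] at h
    exact h
  -- combine
  have hmain : S ≤ ENNReal.ofReal ((2:ℝ) ^ p) * (R ^ β * S ^ θ) := by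
    calc S = ∑' i : ℤ, F (i+1) := hshift.symm
      _ = ∑' i : ℤ, ENNReal.ofReal ((2:ℝ) ^ p) * (G i ^ β * F i ^ θ) := by
          exact tsum_congr hkeyE
      _ = ENNReal.ofReal ((2:ℝ) ^ p) * ∑' i : ℤ, (G i ^ β) * (F i ^ θ) := by
          rw [ENNReal.tsum_mul_left]
      _ ≤ ENNReal.ofReal ((2:ℝ) ^ p) * (R ^ β * S ^ θ) :=
          mul_le_mul_right holder _
  -- absorption
  have hfinal : S ≤ ENNReal.ofReal ((2:ℝ) ^ ((n:ℝ) * p / ((n:ℝ) - s * p))) * R := by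
    by_cases hS0 : S = 0
    · rw [hS0]; exact zero_le
    · have h1 : S ^ β ≤ ENNReal.ofReal ((2:ℝ) ^ p) * R ^ β := by
        have h2 : S * S ^ (-θ) ≤ ENNReal.ofReal ((2:ℝ) ^ p) * (R ^ β * S ^ θ) * S ^ (-θ) :=
          mul_le_mul_left hmain _
        have e4 : S * S ^ (-θ) = S ^ β := by
          nth_rewrite 1 [← ENNReal.rpow_one S]
          rw [← ENNReal.rpow_add _ _ hS0 hS_top, show (1:ℝ) + -θ = β by linarith]
        have e5 : S ^ θ * S ^ (-θ) = 1 := by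
          rw [← ENNReal.rpow_add _ _ hS0 hS_top, add_neg_cancel, ENNReal.rpow_zero]
        calc S ^ β = S * S ^ (-θ) := e4.symm
          _ ≤ ENNReal.ofReal ((2:ℝ) ^ p) * (R ^ β * S ^ θ) * S ^ (-θ) := h2
          _ = ENNReal.ofReal ((2:ℝ) ^ p) * R ^ β * (S ^ θ * S ^ (-θ)) := by ring
          _ = ENNReal.ofReal ((2:ℝ) ^ p) * R ^ β := by rw [e5, mul_one]
      have h3 : (S ^ β) ^ (1/β) ≤ (ENNReal.ofReal ((2:ℝ) ^ p) * R ^ β) ^ (1/β) :=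
        ENNReal.rpow_le_rpow h1 (by positivity)
      have e6 : (S ^ β) ^ (1/β) = S := by
        rw [← ENNReal.rpow_mul, mul_one_div_cancel hβ0.ne', ENNReal.rpow_one]
      have e7 : (ENNReal.ofReal ((2:ℝ) ^ p) * R ^ β) ^ (1/β)
          = ENNReal.ofReal ((2:ℝ) ^ ((n:ℝ) * p / ((n:ℝ) - s * p))) * R := by
        rw [ENNReal.mul_rpow_of_nonneg _ _ (by positivity), ← ENNReal.rpow_mul,
          mul_one_div_cancel hβ0.ne', ENNReal.rpow_one]
        congr 1
        have hden : (n:ℝ) - s * p ≠ 0 := by linarith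
        have hexp : (2:ℝ) ^ ((n:ℝ) * p / ((n:ℝ) - s * p)) = ((2:ℝ) ^ p) ^ (1/β) := by
          rw [← Real.rpow_mul (by norm_num : (0:ℝ) ≤ 2)]
          congr 1
          rw [hβdef]
          field_simp
        rw [hexp]
        exact (ENNReal.ofReal_rpow_of_pos (x := (2:ℝ) ^ p) (p := 1/β) (by positivity))
      rw [← e6, ← e7]
      exact h3
  -- back to ℝ
  have hRHS0 : 0 ≤ (2:ℝ) ^ ((n:ℝ) * p / ((n:ℝ) - s * p)) * ∑' i, g i := by
    have : 0 ≤ ∑' i, g i := tsum_nonneg hg0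
    positivity
  have hfinal2 : S ≤ ENNReal.ofReal
      ((2:ℝ) ^ ((n:ℝ) * p / ((n:ℝ) - s * p)) * ∑' i, g i) := by
    rw [ENNReal.ofReal_mul (by positivity), ← hReq]
    exact hfinal
  have := ENNReal.toReal_le_of_le_ofReal hRHS0 hfinal2
  rw [hSeq, ENNReal.toReal_ofReal (tsum_nonneg hf0)] at this
  exact this
end

section
/- Let n ≥ 1 be an integer, s ∈ (0,1), p ≥ 1 with sp < n, and N ∈ ℤ. Let (a_i)_{i∈ℤ} be a bounded, non-negative, non-increasing sequence of real numbers (a_{i+1} ≤ a_i for all i) with a_i = 0 for all i ≥ N. Then Σ_{i∈ℤ, a_{i−1} ≠ 0} 2^{pi} a_{i−1}^{−sp/n} a_{i+1} ≤ (1/2) · Σ_{i∈ℤ, a_{i−1} ≠ 0} 2^{pi} a_{i−1}^{−sp/n} a_i; both series converge. -/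
open scoped BigOperators

set_option maxHeartbeats 1000000 in
/-- Discrete inequality: for a bounded non-negative non-increasing sequence
`(a_i)_{i∈ℤ}` vanishing for `i ≥ N`,
`Σ_{a_{i-1} ≠ 0} 2^{pi} a_{i-1}^{-sp/n} a_{i+1} ≤ (1/2) Σ_{a_{i-1} ≠ 0} 2^{pi} a_{i-1}^{-sp/n} a_i`,
and both series converge. -/
theorem discrete_shift_inequality
    (n : ℕ) (hn : 1 ≤ n) (s p : ℝ) (hs : s ∈ Set.Ioo (0:ℝ) 1) (hp : 1 ≤ p)
    (hsp : s * p < n) (N : ℤ) (a : ℤ → ℝ)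
    (hbdd : ∃ B : ℝ, ∀ i : ℤ, a i ≤ B)
    (hnonneg : ∀ i : ℤ, 0 ≤ a i)
    (hmono : ∀ i : ℤ, a (i + 1) ≤ a i)
    (hvanish : ∀ i : ℤ, N ≤ i → a i = 0) :
    Summable (fun i : ℤ =>
        if a (i - 1) ≠ 0 then
          (2:ℝ) ^ (p * (i:ℝ)) * a (i - 1) ^ (-(s * p) / (n:ℝ)) * a (i + 1) else 0)
    ∧ Summable (fun i : ℤ =>
        if a (i - 1) ≠ 0 then
          (2:ℝ) ^ (p * (i:ℝ)) * a (i - 1) ^ (-(s * p) / (n:ℝ)) * a i else 0)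
    ∧ (∑' i : ℤ,
        if a (i - 1) ≠ 0 then
          (2:ℝ) ^ (p * (i:ℝ)) * a (i - 1) ^ (-(s * p) / (n:ℝ)) * a (i + 1) else 0)
        ≤ (1/2) * ∑' i : ℤ,
            if a (i - 1) ≠ 0 then
              (2:ℝ) ^ (p * (i:ℝ)) * a (i - 1) ^ (-(s * p) / (n:ℝ)) * a i else 0 := by
  obtain ⟨B, hB⟩ := hbdd
  have hanti : Antitone a := antitone_int_of_succ_le hmono
  set c : ℝ := -(s * p) / (n : ℝ) with hcdef
  have hn0 : (0:ℝ) < n := by exact_mod_cast hn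
  have hc0 : c ≤ 0 := by
    apply div_nonpos_of_nonpos_of_nonneg
    · nlinarith [hs.1, hp]
    · positivity
  set g : ℤ → ℝ := fun i =>
    if a (i - 1) ≠ 0 then (2:ℝ) ^ (p * (i:ℝ)) * a (i - 1) ^ c * a i else 0 with hgdef
  set f : ℤ → ℝ := fun i =>
    if a (i - 1) ≠ 0 then (2:ℝ) ^ (p * (i:ℝ)) * a (i - 1) ^ c * a (i + 1) else 0 with hfdef
  have hfnn : ∀ i, 0 ≤ f i := by
    intro i
    simp only [hfdef]
    split
    · have h1 := hnonneg (i+1)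
      have h2 := hnonneg (i-1)
      positivity
    · exact le_refl _
  have hgnn : ∀ i, 0 ≤ g i := by
    intro i
    simp only [hgdef]
    split
    · have h1 := hnonneg i
      have h2 := hnonneg (i-1)
      positivity
    · exact le_refl _
  -- key pointwise estimate
  have key : ∀ i : ℤ, f i ≤ (1/2) * g (i + 1) := by
    intro i
    by_cases h : a i = 0
    · have hi1 : a (i+1) = 0 := le_antisymm (h ▸ hmono i) (hnonneg (i+1))
      have hf0 : f i = 0 := by
        simp only [hfdef]
        split
        · rw [hi1]; ring
        · rfl
      have : 0 ≤ g (i+1) := hgnn (i+1)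
      rw [hf0]; linarith
    · have hi0 : 0 < a i := lt_of_le_of_ne (hnonneg i) (Ne.symm h)
      have him : a i ≤ a (i-1) := hanti (by omega)
      have him0 : a (i-1) ≠ 0 := (lt_of_lt_of_le hi0 him).ne'
      have hg : g (i+1) = (2:ℝ) ^ (p * ((i:ℝ)+1)) * a i ^ c * a (i+1) := by
        simp only [hgdef, add_sub_cancel_right]
        rw [if_pos h]
        push_cast
        ring_nf
      have hf : f i = (2:ℝ) ^ (p * (i:ℝ)) * a (i-1) ^ c * a (i+1) := by
        simp only [hfdef]
        rw [if_pos him0]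
      rw [hf, hg]
      have hrpow : a (i-1) ^ c ≤ a i ^ c := Real.rpow_le_rpow_of_nonpos hi0 him hc0
      have h2p : (2:ℝ) ≤ (2:ℝ) ^ p := by
        calc (2:ℝ) = (2:ℝ) ^ (1:ℝ) := (Real.rpow_one 2).symm
        _ ≤ (2:ℝ) ^ p := Real.rpow_le_rpow_of_exponent_le one_le_two hp
      have hpow : (2:ℝ) ^ (p * (i:ℝ)) ≤ (1/2) * (2:ℝ) ^ (p * ((i:ℝ)+1)) := by
        rw [mul_add, mul_one, Real.rpow_add two_pos]
        have h2i : (0:ℝ) < (2:ℝ) ^ (p * (i:ℝ)) := Real.rpow_pos_of_pos two_pos _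
        nlinarith
      have ha1 : 0 ≤ a (i+1) := hnonneg (i+1)
      have hac : 0 ≤ a i ^ c := Real.rpow_nonneg (hnonneg i) c
      have h2pi : (0:ℝ) ≤ (2:ℝ) ^ (p * (i:ℝ)) := (Real.rpow_pos_of_pos two_pos _).le
      calc (2:ℝ) ^ (p * (i:ℝ)) * a (i-1) ^ c * a (i+1)
          ≤ (2:ℝ) ^ (p * (i:ℝ)) * a i ^ c * a (i+1) := by
            apply mul_le_mul_of_nonneg_right _ ha1
            exact mul_le_mul_of_nonneg_left hrpow h2pi
        _ ≤ ((1/2) * (2:ℝ) ^ (p * ((i:ℝ)+1))) * a i ^ c * a (i+1) := by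
            apply mul_le_mul_of_nonneg_right _ ha1
            exact mul_le_mul_of_nonneg_right hpow hac
        _ = (1/2) * ((2:ℝ) ^ (p * ((i:ℝ)+1)) * a i ^ c * a (i+1)) := by ring
  -- summability of g
  have hg : Summable g := by
    by_cases hall : ∀ j : ℤ, a j = 0
    · have : g = fun _ => 0 := by
        funext i
        simp only [hgdef, hall (i-1), ne_eq, not_true_eq_false, if_false]
      rw [this]; exact summable_zero
    · push_neg at hall
      obtain ⟨M, hM, hMmax⟩ := Int.exists_greatest_of_bdd
        (P := fun j => a j ≠ 0)
        ⟨N, fun z hz => by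
          by_contra hc'
          exact hz (hvanish z (by omega))⟩ hall
      have haM : 0 < a M := lt_of_le_of_ne (hnonneg M) (Ne.symm hM)
      set r : ℝ := (2:ℝ) ^ p with hrdef
      have hr1 : (2:ℝ) ≤ r := by
        calc (2:ℝ) = (2:ℝ) ^ (1:ℝ) := (Real.rpow_one 2).symm
        _ ≤ r := Real.rpow_le_rpow_of_exponent_le one_le_two hp
      have hr0 : (0:ℝ) < r := by linarith
      set B' : ℝ := max B 1 with hB'def
      have hB'0 : (0:ℝ) < B' := lt_of_lt_of_le one_pos (le_max_right _ _)
      have haB : ∀ i, a i ≤ B' := fun i => (hB i).trans (le_max_left _ _)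
      set C : ℝ := a M ^ c * B' with hCdef
      have hC0 : 0 ≤ C := by positivity
      have hrzpow : ∀ i : ℤ, (2:ℝ) ^ (p * (i:ℝ)) = r ^ i := by
        intro i
        rw [hrdef, ← Real.rpow_intCast ((2:ℝ)^p) i, ← Real.rpow_mul (by norm_num)]
      set h : ℤ → ℝ := fun i => if i ≤ M + 1 then C * r ^ i else 0 with hhdef
      have hgh : ∀ i, g i ≤ h i := by
        intro i
        simp only [hgdef, hhdef]
        split
        · rename_i hne
          have hiM : i - 1 ≤ M := hMmax _ hne
          rw [if_pos (by omega), hrzpow i]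
          have haim : a M ≤ a (i-1) := hanti hiM
          have h1 : a (i-1) ^ c ≤ a M ^ c := Real.rpow_le_rpow_of_nonpos haM haim hc0
          have h2 : a i ≤ B' := haB i
          have hrz : (0:ℝ) ≤ r ^ i := zpow_nonneg hr0.le i
          have hMc : (0:ℝ) ≤ a M ^ c := Real.rpow_nonneg haM.le c
          calc r ^ i * a (i-1) ^ c * a i ≤ r ^ i * a M ^ c * a i := by
                apply mul_le_mul_of_nonneg_right _ (hnonneg i)
                exact mul_le_mul_of_nonneg_left h1 hrz
            _ ≤ r ^ i * a M ^ c * B' := by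
                apply mul_le_mul_of_nonneg_left h2
                positivity
            _ = C * r ^ i := by rw [hCdef]; ring
        · split
          · positivity
          · exact le_refl _
      have hh : Summable h := by
        apply Summable.of_nat_of_neg
        · apply summable_of_ne_finset_zero (s := Finset.range ((M+1).toNat + 1))
          intro m hm
          simp only [Finset.mem_range, not_lt] at hm
          simp only [hhdef]
          rw [if_neg (by omega)]
        · have hgeo : Summable (fun m : ℕ => C * (r⁻¹) ^ m) := by
            apply Summable.mul_left
            apply summable_geometric_of_lt_one (by positivity)
            rw [inv_lt_one_iff₀]; right; linarith
          apply Summable.of_nonneg_of_le _ _ hgeo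
          · intro m
            simp only [hhdef]
            split
            · positivity
            · exact le_refl _
          · intro m
            simp only [hhdef]
            split
            · rename_i hmle
              rw [zpow_neg, ← zpow_natCast r⁻¹, inv_zpow]
            · positivity
      exact Summable.of_nonneg_of_le hgnn hgh hh
  -- conclude
  have hgs : Summable (fun i : ℤ => g (i + 1)) :=
    (Equiv.addRight (1:ℤ)).summable_iff.mpr hg
  have hf : Summable f :=
    Summable.of_nonneg_of_le hfnn key (hgs.mul_left (1/2))
  refine ⟨hf, hg, ?_⟩
  calc (∑' i : ℤ, f i) ≤ ∑' i : ℤ, (1/2) * g (i+1) :=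
        Summable.tsum_le_tsum key hf (hgs.mul_left (1/2))
    _ = (1/2) * ∑' i : ℤ, g (i+1) := tsum_mul_left
    _ = (1/2) * ∑' i : ℤ, g i := by
        congr 1
        exact (Equiv.addRight (1:ℤ)).tsum_eq g
end

section
/- Let n ≥ 1 be an integer, s ∈ (0,1), and p ≥ 1. Then there exists a constant C > 0, depending only on n, s, and p, such that for every open convex set Ω ⊂ ℝ^{n+1}, every x ∈ ∂Ω, and every R > 0, one has ∫_{∂Ω∖B_R(x)} |x − y|^{−(n+sp)} dy ≤ C · R^{−sp}. -/
open MeasureTheory Set Filter Metric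
open scoped ENNReal NNReal

open scoped RealInnerProductSpace

lemma exists_proj_convex {E : Type*} [NormedAddCommGroup E] [InnerProductSpace ℝ E]
    [CompleteSpace E] (K : Set E) (hne : K.Nonempty) (hK : IsClosed K) (hconv : Convex ℝ K) :
    ∃ P : E → E, LipschitzWith 1 P ∧ (∀ z, P z ∈ K) ∧
      ∀ z y, y ∈ K → (∀ w ∈ K, ⟪z - y, w - y⟫ ≤ 0) → P z = y := by
  have hbdd : ∀ z : E, BddBelow (Set.range fun w : K => ‖z - (w : E)‖) := fun z =>
    ⟨0, Set.forall_mem_range.2 fun _ => norm_nonneg _⟩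
  choose P hPK hPmin using
    exists_norm_eq_iInf_of_complete_convex hne hK.isComplete hconv
  have hvar : ∀ z, ∀ w ∈ K, ⟪z - P z, w - P z⟫ ≤ 0 := fun z =>
    (norm_eq_iInf_iff_real_inner_le_zero hconv (hPK z)).1 (hPmin z)
  have key : ∀ z z', ‖P z - P z'‖ ≤ ‖z - z'‖ := by
    intro z z'
    have h1 := hvar z (P z') (hPK z')
    have h2 := hvar z' (P z) (hPK z)
    have e1 : ⟪z - z', P z - P z'⟫ - ⟪P z - P z', P z - P z'⟫
        = -⟪z - P z, P z' - P z⟫ - ⟪z' - P z', P z - P z'⟫ := by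
      simp only [inner_sub_left, inner_sub_right]; ring
    have e2 : ⟪P z - P z', P z - P z'⟫ = ‖P z - P z'‖ ^ 2 := real_inner_self_eq_norm_sq _
    have e3 : ⟪z - z', P z - P z'⟫ ≤ ‖z - z'‖ * ‖P z - P z'‖ := real_inner_le_norm _ _
    nlinarith [norm_nonneg (P z - P z'), norm_nonneg (z - z')]
  refine ⟨P, ?_, hPK, ?_⟩
  · refine LipschitzWith.of_dist_le_mul fun z z' => ?_
    simpa [dist_eq_norm] using key z z'
  · intro z y hy hvy
    have h1 : ‖z - P z‖ ≤ ‖z - y‖ := by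
      rw [hPmin z]
      exact ciInf_le (hbdd z) (⟨y, hy⟩ : K)
    have h2 : ‖z - P z‖ ^ 2 = ‖z - y‖ ^ 2 - 2 * ⟪z - y, P z - y⟫ + ‖P z - y‖ ^ 2 := by
      have hz : z - P z = (z - y) - (P z - y) := by abel
      rw [hz, norm_sub_sq_real]
    have h3 : ⟪z - y, P z - y⟫ ≤ 0 := hvy (P z) (hPK z)
    have h4 : ‖P z - y‖ = 0 := by
      nlinarith [norm_nonneg (P z - y), norm_nonneg (z - P z), norm_nonneg (z - y)]
    have h5 := norm_eq_zero.1 h4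
    rw [sub_eq_zero] at h5
    exact h5

lemma convex_frontier_ball_measure (n : ℕ) :
    ∃ M : ℝ≥0∞, M ≠ ∞ ∧
      ∀ (Ω : Set (EuclideanSpace ℝ (Fin (n+1)))), IsOpen Ω → Convex ℝ Ω →
      ∀ x ∈ frontier Ω, ∀ r : ℝ, 0 < r →
        μH[(n:ℝ)] (frontier Ω ∩ ball x r) ≤ M * ENNReal.ofReal r ^ n := by
  set E := EuclideanSpace ℝ (Fin (n+1))
  set e := WithLp.equiv 2 (Fin (n+1) → ℝ) with he
  set κ : ℝ≥0 := (Fintype.card (Fin (n+1)) : ℝ≥0) ^ ((1 / (2:ℝ≥0∞)).toReal) with hκ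
  have hκpos : (0:ℝ) < κ := by
    have : (0:ℝ≥0) < κ := NNReal.rpow_pos (by simp [Fintype.card_fin])
    exact_mod_cast this
  have hsymm_lip : LipschitzWith κ (e.symm) :=
    (PiLp.antilipschitzWith_ofLp 2 (fun _ : Fin (n+1) => ℝ)).to_rightInverse
      e.apply_symm_apply
  have hE_le : ∀ v : E, ‖e v‖ ≤ ‖v‖ := by
    intro v
    have h := (PiLp.lipschitzWith_ofLp 2 (fun _ : Fin (n+1) => ℝ)).dist_le_mul v 0
    simp [dist_eq_norm] at h
    exact h
  have hE_ge : ∀ v : E, ‖v‖ ≤ (κ:ℝ) * ‖e v‖ := by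
    intro v
    have h := (PiLp.antilipschitzWith_ofLp 2 (fun _ : Fin (n+1) => ℝ)).le_mul_dist v 0
    simp [dist_eq_norm, hκ] at h ⊢
    exact h
  have hμpi : (μH[(n:ℝ)] : Measure (Fin n → ℝ)) = volume := by
    have h := MeasureTheory.hausdorffMeasure_pi_real (ι := Fin n)
    simpa using h
  refine ⟨2 * (n+1) * (κ:ℝ≥0∞) ^ (n:ℝ) * (ENNReal.ofReal 4) ^ n, ?_, ?_⟩
  · refine ENNReal.mul_ne_top (ENNReal.mul_ne_top (ENNReal.mul_ne_top (by simp) (by simp)) ?_) ?_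
    · exact ENNReal.rpow_ne_top_of_nonneg (by positivity) ENNReal.coe_ne_top
    · exact ENNReal.pow_ne_top ENNReal.ofReal_ne_top
  intro Ω hΩ hconv x hx r hr
  rcases Ω.eq_empty_or_nonempty with rfl | hne
  · simp at hx
  -- the projection
  obtain ⟨P, hPlip, hPK, hPuniq⟩ :=
    exists_proj_convex (closure Ω) hne.closure isClosed_closure hconv.closure
  -- faces
  set box : Set (Fin n → ℝ) := Set.univ.pi fun _ => Icc (-(2*r)) (2*r) with hbox
  set g : Fin (n+1) → ℝ → (Fin n → ℝ) → E :=
    fun i c w => x + e.symm (Fin.insertNth i c w) with hg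
  have hins : ∀ (i : Fin (n+1)) (c : ℝ),
      LipschitzWith 1 (fun w : Fin n → ℝ => (Fin.insertNth i c w : Fin (n+1) → ℝ)) := by
    intro i c
    refine LipschitzWith.of_dist_le_mul fun w w' => ?_
    rw [NNReal.coe_one, one_mul]
    refine (dist_pi_le_iff dist_nonneg).2 fun j => ?_
    refine Fin.succAboveCases i ?_ ?_ j
    · simpa [Fin.insertNth_apply_same] using dist_nonneg
    · intro j'
      simpa [Fin.insertNth_apply_succAbove] using dist_le_pi_dist w w' j'
  have hg_lip : ∀ i c, LipschitzWith κ (g i c) := by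
    intro i c
    have haddx : LipschitzWith 1 (fun v : E => x + v) :=
      LipschitzWith.of_dist_le_mul fun a b => by simp [dist_add_left]
    have h := (haddx.comp (hsymm_lip.comp (hins i c)))
    rw [one_mul, mul_one] at h
    exact h
  have hFB : ∀ i c, μH[(n:ℝ)] (g i c '' box)
      ≤ (κ:ℝ≥0∞) ^ (n:ℝ) * (ENNReal.ofReal (4*r)) ^ n := by
    intro i c
    have h := (hg_lip i c).hausdorffMeasure_image_le (by positivity : (0:ℝ) ≤ (n:ℝ)) box
    refine h.trans ?_
    gcongr
    rw [hμpi, hbox, volume_pi_pi]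
    have h44 : (2*r) - (-(2*r)) = 4*r := by ring
    simp only [Real.volume_Icc, h44, Finset.prod_const, Finset.card_univ, Fintype.card_fin]
    exact le_rfl
  -- the sup-sphere
  set S : Set E := {z : E | ‖e (z - x)‖ = 2*r} with hS
  -- covering of the sphere by faces
  have hcover : S ⊆ ⋃ i : Fin (n+1), (g i (2*r) '' box ∪ g i (-(2*r)) '' box) := by
    intro z hz
    set u : Fin (n+1) → ℝ := e (z - x) with hu
    have hnorm : ‖u‖ = 2*r := hz
    obtain ⟨i, -, hi⟩ := Finset.exists_mem_eq_sup (Finset.univ : Finset (Fin (n+1)))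
      Finset.univ_nonempty (fun j => ‖u j‖₊)
    have hui : |u i| = 2*r := by
      have h1 : ‖u‖₊ = ‖u i‖₊ := by rw [Pi.nnnorm_def]; exact hi
      have h2 : ‖u‖ = ‖u i‖ := congrArg NNReal.toReal h1
      rw [← hnorm, ← Real.norm_eq_abs, h2]
    have hle : ∀ j, |u j| ≤ 2*r := by
      intro j
      have := norm_le_pi_norm u j
      simpa [Real.norm_eq_abs, hnorm] using this
    set w : Fin n → ℝ := Fin.removeNth i u with hw
    have hwbox : w ∈ box := by
      intro j _
      exact abs_le.1 (hle (i.succAbove j))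
    have hzw : ∀ c, u i = c → z = g i c w := by
      intro c hc
      have h1 : Fin.insertNth i c w = u := by rw [← hc, hw]; exact Fin.insertNth_self_removeNth i u
      rw [hg]
      simp only [h1]
      rw [hu]
      simp
    rcases abs_eq (by positivity : (0:ℝ) ≤ 2*r) |>.1 hui with hc | hc
    · exact Set.mem_iUnion.2 ⟨i, Or.inl ⟨w, hwbox, (hzw _ hc).symm⟩⟩
    · exact Set.mem_iUnion.2 ⟨i, Or.inr ⟨w, hwbox, (hzw _ hc).symm⟩⟩
  -- the key geometric fact: frontier ∩ ball ⊆ P '' S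
  have hsub : frontier Ω ∩ ball x r ⊆ P '' S := by
    rintro y ⟨hyf, hyb⟩
    have hyK : y ∈ closure Ω := frontier_subset_closure hyf
    have hyΩ : y ∉ Ω := by
      intro h
      exact hyf.2 (by rwa [hΩ.interior_eq])
    obtain ⟨f, hf⟩ := geometric_hahn_banach_open_point hconv hΩ hyΩ
    have hfne : f ≠ 0 := by
      intro h0
      obtain ⟨a₀, ha₀⟩ := hne
      have := hf a₀ ha₀
      rw [h0] at this
      simp at this
    set ν' : E := (InnerProductSpace.toDual ℝ E).symm f with hν'
    have hν'ne : ν' ≠ 0 := by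
      intro h0
      apply hfne
      rw [hν'] at h0
      have h1 := congrArg (InnerProductSpace.toDual ℝ E) h0
      simp only [LinearIsometryEquiv.apply_symm_apply, map_zero] at h1
      exact h1
    set ν : E := ‖ν'‖⁻¹ • ν' with hνdef
    have hνnorm : ‖ν‖ = 1 := norm_smul_inv_norm hν'ne
    have hsupp : ∀ w ∈ closure Ω, ⟪ν, w - y⟫ ≤ 0 := by
      intro w hw
      have hle' : f w ≤ f y := by
        have hcl : closure Ω ⊆ {v : E | f v ≤ f y} :=
          closure_minimal (fun a ha => (hf a ha).le) (isClosed_le f.continuous continuous_const)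
        exact hcl hw
      have hinner : ⟪ν', w - y⟫ = f w - f y := by
        rw [hν', InnerProductSpace.toDual_symm_apply]
        simp [map_sub]
      rw [hνdef, real_inner_smul_left, hinner]
      have : (0:ℝ) ≤ ‖ν'‖⁻¹ := by positivity
      nlinarith
    -- intermediate value argument to hit the sup-sphere
    set φ : ℝ → ℝ := fun t => ‖e (y + t • ν - x)‖ with hφ
    have hφcont : Continuous φ := by
      have h1 : Continuous fun t : ℝ => y + t • ν - x := by fun_prop
      exact ((PiLp.lipschitzWith_ofLp 2 (fun _ : Fin (n+1) => ℝ)).continuous.comp h1).norm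
    have hyx : ‖y - x‖ < r := by
      rw [← dist_eq_norm]
      exact mem_ball.1 hyb
    have hφ0 : φ 0 ≤ 2*r := by
      have h1 : φ 0 = ‖e (y - x)‖ := by simp [hφ]
      have h2 := hE_le (y - x)
      rw [h1]
      linarith
    set T : ℝ := (κ:ℝ) * (2*r) + ‖y - x‖ with hT
    have hT0 : (0:ℝ) ≤ T := by positivity
    have hφT : 2*r ≤ φ T := by
      have h6 := norm_sub_norm_le (T • ν) (x - y)
      have h7 : T • ν - (x - y) = y + T • ν - x := by abel
      have h8 : ‖T • ν‖ = T := by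
        rw [norm_smul, hνnorm, mul_one, Real.norm_eq_abs, abs_of_nonneg hT0]
      have h9 : ‖x - y‖ = ‖y - x‖ := norm_sub_rev x y
      rw [h7, h8, h9] at h6
      have h10 : (κ:ℝ) * (2*r) ≤ ‖y + T • ν - x‖ := by rw [hT] at h6; linarith
      have h11 := hE_ge (y + T • ν - x)
      have h12 : (κ:ℝ) * (2*r) ≤ (κ:ℝ) * ‖e (y + T • ν - x)‖ := le_trans h10 h11
      exact le_of_mul_le_mul_left h12 hκpos
    obtain ⟨t, htmem, hφt⟩ := intermediate_value_Icc hT0 hφcont.continuousOn ⟨hφ0, hφT⟩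
    refine ⟨y + t • ν, hφt, ?_⟩
    refine hPuniq _ _ hyK fun w hw => ?_
    have h13 : y + t • ν - y = t • ν := by abel
    rw [h13, real_inner_smul_left]
    exact mul_nonpos_iff.2 (Or.inl ⟨htmem.1, hsupp w hw⟩)
  -- putting the measure estimates together
  calc μH[(n:ℝ)] (frontier Ω ∩ ball x r) ≤ μH[(n:ℝ)] (P '' S) := measure_mono hsub
    _ ≤ ((1:ℝ≥0):ℝ≥0∞) ^ (n:ℝ) * μH[(n:ℝ)] S :=
        hPlip.hausdorffMeasure_image_le (by positivity) S
    _ = μH[(n:ℝ)] S := by simp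
    _ ≤ μH[(n:ℝ)] (⋃ i : Fin (n+1), (g i (2*r) '' box ∪ g i (-(2*r)) '' box)) :=
        measure_mono hcover
    _ ≤ ∑' i : Fin (n+1), μH[(n:ℝ)] (g i (2*r) '' box ∪ g i (-(2*r)) '' box) :=
        measure_iUnion_le _
    _ ≤ ∑' i : Fin (n+1), ((κ:ℝ≥0∞) ^ (n:ℝ) * (ENNReal.ofReal (4*r)) ^ n
          + (κ:ℝ≥0∞) ^ (n:ℝ) * (ENNReal.ofReal (4*r)) ^ n) := by
        refine ENNReal.tsum_le_tsum fun i => ?_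
        exact (measure_union_le _ _).trans (add_le_add (hFB i _) (hFB i _))
    _ = (n+1) * ((κ:ℝ≥0∞) ^ (n:ℝ) * (ENNReal.ofReal (4*r)) ^ n
          + (κ:ℝ≥0∞) ^ (n:ℝ) * (ENNReal.ofReal (4*r)) ^ n) := by
        rw [tsum_fintype]
        simp [Finset.sum_const, Finset.card_univ, Fintype.card_fin, nsmul_eq_mul]
        ring
    _ ≤ 2 * (n+1) * (κ:ℝ≥0∞) ^ (n:ℝ) * (ENNReal.ofReal 4) ^ n * ENNReal.ofReal r ^ n := by
        have h4r : (ENNReal.ofReal (4*r)) ^ n = (ENNReal.ofReal 4) ^ n * ENNReal.ofReal r ^ n := by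
          rw [ENNReal.ofReal_mul (by norm_num : (0:ℝ) ≤ 4), mul_pow]
        refine le_of_eq ?_
        rw [h4r]
        ring

/-- Tail estimate for the nonlocal kernel on the boundary of a convex set:
`∫_{∂Ω∖B_R(x)} |x-y|^{-(n+sp)} dy ≤ C R^{-sp}`. -/
theorem convex_boundary_tail_estimate
    (n : ℕ) (hn : 1 ≤ n) (s p : ℝ) (hs : s ∈ Set.Ioo (0:ℝ) 1) (hp : 1 ≤ p) :
    ∃ C : ℝ, 0 < C ∧
      ∀ (Ω : Set (EuclideanSpace ℝ (Fin (n+1)))), IsOpen Ω → Convex ℝ Ω →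
      ∀ x ∈ frontier Ω, ∀ R : ℝ, 0 < R →
        (∫⁻ y in frontier Ω \ ball x R,
            ENNReal.ofReal (dist x y ^ (-((n:ℝ) + s * p))) ∂μH[(n:ℝ)])
          ≤ ENNReal.ofReal (C * R ^ (-(s * p))) := by
  obtain ⟨M, hMne, hM⟩ := convex_frontier_ball_measure n
  set a : ℝ := s * p with ha
  have hapos : 0 < a := mul_pos hs.1 (lt_of_lt_of_le zero_lt_one hp)
  set q : ℝ≥0∞ := ENNReal.ofReal ((2:ℝ) ^ (-a)) with hq
  have hq1 : q < 1 := by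
    rw [hq]
    exact ENNReal.ofReal_lt_one.2
      (Real.rpow_lt_one_of_one_lt_of_neg one_lt_two (by linarith))
  set D : ℝ≥0∞ := M * ENNReal.ofReal ((2:ℝ)^n) * (1 - q)⁻¹ with hD
  have hDne : D ≠ ∞ := by
    refine ENNReal.mul_ne_top (ENNReal.mul_ne_top hMne ENNReal.ofReal_ne_top) ?_
    exact ENNReal.inv_ne_top.2 (tsub_pos_of_lt hq1).ne'
  refine ⟨D.toReal + 1, by positivity, ?_⟩
  intro Ω hΩ hconv x hx R hR
  set A : ℕ → Set (EuclideanSpace ℝ (Fin (n+1))) :=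
    fun k => frontier Ω ∩ (ball x (2^(k+1) * R) \ ball x (2^k * R)) with hA
  have hcover : frontier Ω \ ball x R ⊆ ⋃ k, A k := by
    rintro y ⟨hyf, hyb⟩
    have hd : R ≤ dist y x := by
      by_contra h
      exact hyb (mem_ball.2 (lt_of_not_ge h))
    have hdR : (0:ℝ) < dist y x := lt_of_lt_of_le hR hd
    obtain ⟨m, hm1, hm2⟩ := exists_mem_Ico_zpow (div_pos hdR hR) one_lt_two
    have hm0 : 0 ≤ m := by
      by_contra h
      push_neg at h
      have h1 : (2:ℝ)^(m+1) ≤ 2^(0:ℤ) := zpow_le_zpow_right₀ one_le_two (by omega)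
      have h2 : (1:ℝ) ≤ dist y x / R := (one_le_div hR).2 hd
      simp only [zpow_zero] at h1
      linarith
    set k := m.toNat with hk
    have hmk : m = (k:ℤ) := (Int.toNat_of_nonneg hm0).symm
    have hub : dist y x < 2^(k+1) * R := by
      have h3 : dist y x / R < (2:ℝ)^(k+1) := by
        have := hm2
        rw [hmk] at this
        have h4 : ((k:ℤ)+1) = ((k+1 : ℕ) : ℤ) := by push_cast; ring
        rwa [h4, zpow_natCast] at this
      calc dist y x = (dist y x / R) * R := by field_simp
        _ < 2^(k+1) * R := by apply mul_lt_mul_of_pos_right h3 hR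
    have hlb : 2^k * R ≤ dist y x := by
      have h5 : (2:ℝ)^k ≤ dist y x / R := by
        have := hm1
        rwa [hmk, zpow_natCast] at this
      calc (2:ℝ)^k * R ≤ (dist y x / R) * R := mul_le_mul_of_nonneg_right h5 hR.le
        _ = dist y x := by field_simp
    refine mem_iUnion.2 ⟨k, hyf, mem_ball.2 hub, fun hmem => ?_⟩
    exact absurd (mem_ball.1 hmem) (not_lt.2 hlb)
  have hmain : ∀ k : ℕ,
      (∫⁻ y in A k, ENNReal.ofReal (dist x y ^ (-((n:ℝ) + a))) ∂μH[(n:ℝ)])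
      ≤ (M * ENNReal.ofReal ((2:ℝ)^n) * ENNReal.ofReal (R ^ (-a))) * q ^ k := by
    intro k
    set B : ℝ := 2^k * R with hB
    have hBpos : 0 < B := by positivity
    have step1 : ∀ y ∈ A k, ENNReal.ofReal (dist x y ^ (-((n:ℝ) + a)))
        ≤ ENNReal.ofReal (B ^ (-((n:ℝ) + a))) := by
      intro y hy
      refine ENNReal.ofReal_le_ofReal ?_
      have hdB : B ≤ dist x y := by
        rw [dist_comm]
        by_contra hlt
        push_neg at hlt
        exact hy.2.2 (mem_ball.2 hlt)
      have hnn : (0:ℝ) ≤ (n:ℝ) := Nat.cast_nonneg n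
      exact Real.rpow_le_rpow_of_nonpos hBpos hdB (by linarith)
    have hrealeq : B ^ (-((n:ℝ)+a)) * ((2:ℝ)^(k+1)*R)^n
        = 2^n * R ^ (-a) * ((2:ℝ)^(-a))^k := by
      have h2B : (2:ℝ)^(k+1) * R = 2 * B := by rw [hB]; ring
      have e2 : B ^ (-((n:ℝ) + a)) * B^n = B ^ (-a) := by
        rw [← Real.rpow_natCast B n, ← Real.rpow_add hBpos,
          show -((n:ℝ)+a) + n = -a by ring]
      have e3 : B ^ (-a) = ((2:ℝ)^(-a))^k * R ^ (-a) := by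
        rw [hB, Real.mul_rpow (by positivity) hR.le]
        congr 1
        rw [← Real.rpow_natCast (2:ℝ) k, ← Real.rpow_mul (by norm_num), mul_comm,
          Real.rpow_mul (by norm_num), Real.rpow_natCast]
      calc B ^ (-((n:ℝ)+a)) * ((2:ℝ)^(k+1)*R)^n
          = 2^n * (B ^ (-((n:ℝ)+a)) * B^n) := by rw [h2B, mul_pow]; ring
        _ = 2^n * B ^ (-a) := by rw [e2]
        _ = 2^n * (((2:ℝ)^(-a))^k * R ^ (-a)) := by rw [e3]
        _ = 2^n * R ^ (-a) * ((2:ℝ)^(-a))^k := by ring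
    calc (∫⁻ y in A k, ENNReal.ofReal (dist x y ^ (-((n:ℝ) + a))) ∂μH[(n:ℝ)])
        ≤ ∫⁻ _ in A k, ENNReal.ofReal (B ^ (-((n:ℝ)+a))) ∂μH[(n:ℝ)] :=
          setLIntegral_mono measurable_const step1
      _ = ENNReal.ofReal (B ^ (-((n:ℝ)+a))) * μH[(n:ℝ)] (A k) := setLIntegral_const _ _
      _ ≤ ENNReal.ofReal (B ^ (-((n:ℝ)+a))) * (M * ENNReal.ofReal ((2:ℝ)^(k+1) * R) ^ n) := by
          gcongr
          refine (measure_mono fun y hy => ?_).trans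
            (hM Ω hΩ hconv x hx ((2:ℝ)^(k+1)*R) (by positivity))
          exact ⟨hy.1, hy.2.1⟩
      _ = M * (ENNReal.ofReal (B ^ (-((n:ℝ)+a))) * ENNReal.ofReal (((2:ℝ)^(k+1) * R)^n)) := by
          rw [← ENNReal.ofReal_pow (by positivity)]; ring
      _ = M * ENNReal.ofReal (B ^ (-((n:ℝ)+a)) * ((2:ℝ)^(k+1) * R)^n) := by
          rw [← ENNReal.ofReal_mul (by positivity)]
      _ = M * ENNReal.ofReal (2^n * R ^ (-a) * ((2:ℝ)^(-a))^k) := by rw [hrealeq]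
      _ = M * (ENNReal.ofReal ((2:ℝ)^n) * ENNReal.ofReal (R ^ (-a))
            * ENNReal.ofReal (((2:ℝ)^(-a))^k)) := by
          rw [← ENNReal.ofReal_mul (by positivity), ← ENNReal.ofReal_mul (by positivity)]
      _ = (M * ENNReal.ofReal ((2:ℝ)^n) * ENNReal.ofReal (R ^ (-a))) * q ^ k := by
          rw [hq, ← ENNReal.ofReal_pow (by positivity)]; ring
  calc (∫⁻ y in frontier Ω \ ball x R,
          ENNReal.ofReal (dist x y ^ (-((n:ℝ) + a))) ∂μH[(n:ℝ)])
      ≤ ∫⁻ y in ⋃ k, A k, ENNReal.ofReal (dist x y ^ (-((n:ℝ) + a))) ∂μH[(n:ℝ)] :=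
        lintegral_mono_set hcover
    _ ≤ ∑' k, ∫⁻ y in A k, ENNReal.ofReal (dist x y ^ (-((n:ℝ) + a))) ∂μH[(n:ℝ)] :=
        lintegral_iUnion_le _ _
    _ ≤ ∑' k, (M * ENNReal.ofReal ((2:ℝ)^n) * ENNReal.ofReal (R ^ (-a))) * q ^ k :=
        ENNReal.tsum_le_tsum hmain
    _ = (M * ENNReal.ofReal ((2:ℝ)^n) * ENNReal.ofReal (R ^ (-a))) * (1 - q)⁻¹ := by
        rw [ENNReal.tsum_mul_left, ENNReal.tsum_geometric]
    _ = D * ENNReal.ofReal (R ^ (-a)) := by rw [hD]; ring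
    _ ≤ ENNReal.ofReal (D.toReal + 1) * ENNReal.ofReal (R ^ (-a)) := by
        gcongr
        calc D = ENNReal.ofReal D.toReal := (ENNReal.ofReal_toReal hDne).symm
          _ ≤ ENNReal.ofReal (D.toReal + 1) := ENNReal.ofReal_le_ofReal (by linarith)
    _ = ENNReal.ofReal ((D.toReal + 1) * R ^ (-a)) := by
        rw [← ENNReal.ofReal_mul (by positivity)]
end
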